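/- Let (𝔫, ⟨·|·⟩) be a pseudo H-type Lie algebra and let x ∈ 𝔫₋₁ satisfy ⟨x|x⟩ ≠ 0. Then the subspace 𝔫₋₁(x) = ℝx + {J_z(x) : z ∈ 𝔫₋₂} is a non-degenerate subspace of (𝔫₋₁, ⟨·|·⟩): the restriction of ⟨·|·⟩ to 𝔫₋₁(x) is a non-degenerate bilinear form. -/

import Mathlib

/-- The center of a Lie algebra, as a submodule. -/
def ctr (L : Type*) [LieRing L] [LieAlgebra ℝ L] : Submodule ℝ L where
  carrier := {z | ∀ x : L, ⁅z, x⁆ = 0}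
  add_mem' := by
    intro a b ha hb x
    rw [add_lie, ha x, hb x, add_zero]
  zero_mem' := by
    intro x
    exact zero_lie x
  smul_mem' := by
    intro c a ha x
    rw [smul_lie, ha x, smul_zero]

/-- for x ∈ 𝔫₋₁ with ⟨x|x⟩ ≠ 0, the subspace
𝔫₋₁(x) = ℝx + J_{𝔫₋₂}(x) is non-degenerate. -/
theorem stmt11
    (L : Type*) [LieRing L] [LieAlgebra ℝ L] [FiniteDimensional ℝ L]
    (B : L →ₗ[ℝ] L →ₗ[ℝ] ℝ)
    (hsymm : ∀ a b : L, B a b = B b a)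
    (hnondeg : ∀ a : L, (∀ b : L, B a b = 0) → a = 0)
    (h2stepA : ∃ a b : L, ⁅a, b⁆ ≠ 0)
    (h2stepB : ∀ a b c : L, ⁅a, ⁅b, c⁆⁆ = 0)
    (hctrnd : ∀ z ∈ ctr L, (∀ w ∈ ctr L, B z w = 0) → z = 0)
    (n1 : Submodule ℝ L)
    (hn : ∀ x : L, x ∈ n1 ↔ ∀ z ∈ ctr L, B x z = 0)
    (J : L → L →ₗ[ℝ] L)
    (hJmap : ∀ z ∈ ctr L, ∀ x ∈ n1, J z x ∈ n1)
    (hJdef : ∀ z ∈ ctr L, ∀ x ∈ n1, ∀ y ∈ n1, B (J z x) y = B z ⁅x, y⁆)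
    (hJsq : ∀ z ∈ ctr L, ∀ x ∈ n1, J z (J z x) = -(B z z) • x) :
    ∀ x ∈ n1, B x x ≠ 0 →
      ∀ v ∈ Submodule.span ℝ ({x} ∪ {v : L | ∃ w ∈ ctr L, v = J w x}),
        (∀ w ∈ Submodule.span ℝ ({x} ∪ {v : L | ∃ w' ∈ ctr L, v = J w' x}), B v w = 0) →
        v = 0 := by
  -- B is reflexive
  have hrefl : B.IsRefl := fun a b h => by rw [hsymm]; exact h
  -- n1 is the orthogonal complement of the center
  have hn1eq : n1 = LinearMap.BilinForm.orthogonal B (ctr L) := by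
    ext u
    rw [hn, LinearMap.BilinForm.mem_orthogonal_iff]
    constructor
    · intro h z hz
      exact hrefl u z (h z hz)
    · intro h z hz
      exact hrefl z u (h z hz)
  -- every element decomposes as center part + n1 part
  have hdecomp : ∀ b : L, ∃ z ∈ ctr L, ∃ y ∈ n1, b = z + y := by
    have hres : (LinearMap.BilinForm.restrict B (ctr L)).Nondegenerate := by
      refine ⟨fun ⟨z, hz⟩ h => ?_, fun ⟨z, hz⟩ h => ?_⟩
      exact Subtype.ext (hctrnd z hz (fun w hw => by simpa using h ⟨w, hw⟩))
      exact Subtype.ext (hctrnd z hz (fun w hw => by rw [hsymm]; simpa using h ⟨w, hw⟩))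
    have hcompl := LinearMap.BilinForm.isCompl_orthogonal_of_restrict_nondegenerate
      (B := B) (W := ctr L) hrefl hres
    intro b
    have : b ∈ (ctr L) ⊔ LinearMap.BilinForm.orthogonal B (ctr L) := by
      rw [hcompl.sup_eq_top]; trivial
    obtain ⟨z, hz, y, hy, hb⟩ := Submodule.mem_sup.mp this
    exact ⟨z, hz, y, hn1eq ▸ hy, hb.symm⟩
  -- B is nondegenerate on n1
  have hn1nd : ∀ u ∈ n1, (∀ y ∈ n1, B u y = 0) → u = 0 := by
    intro u hu h
    apply hnondeg
    intro b
    obtain ⟨z, hz, y, hy, rfl⟩ := hdecomp b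
    rw [map_add, (hn u).mp hu z hz, h y hy, add_zero]
  -- additivity of J in z, on n1
  have hJadd : ∀ z ∈ ctr L, ∀ w ∈ ctr L, ∀ y ∈ n1,
      J (z + w) y = J z y + J w y := by
    intro z hz w hw y hy
    have hzw : z + w ∈ ctr L := (ctr L).add_mem hz hw
    have hmem : J (z + w) y - (J z y + J w y) ∈ n1 := by
      exact Submodule.sub_mem _ (hJmap _ hzw _ hy)
        (Submodule.add_mem _ (hJmap _ hz _ hy) (hJmap _ hw _ hy))
    have h0 : J (z + w) y - (J z y + J w y) = 0 := by
      apply hn1nd _ hmem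
      intro y' hy'
      rw [map_sub, map_add, LinearMap.sub_apply, LinearMap.add_apply,
        hJdef _ hzw _ hy _ hy', hJdef _ hz _ hy _ hy', hJdef _ hw _ hy _ hy',
        map_add, LinearMap.add_apply]
      ring
    exact sub_eq_zero.mp h0
  -- J 0 x = 0 on n1
  have hJ0 : ∀ y ∈ n1, J (0 : L) y = 0 := by
    intro y hy
    have h := hJadd 0 (ctr L).zero_mem 0 (ctr L).zero_mem y hy
    rw [add_zero] at h
    exact (left_eq_add.mp h)
  -- smul
  have hJsmul : ∀ c : ℝ, ∀ z ∈ ctr L, ∀ y ∈ n1, J (c • z) y = c • J z y := by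
    intro c z hz y hy
    have hcz : c • z ∈ ctr L := (ctr L).smul_mem c hz
    have hmem : J (c • z) y - c • J z y ∈ n1 :=
      Submodule.sub_mem _ (hJmap _ hcz _ hy) (Submodule.smul_mem _ c (hJmap _ hz _ hy))
    have h0 : J (c • z) y - c • J z y = 0 := by
      apply hn1nd _ hmem
      intro y' hy'
      rw [map_sub, map_smul, LinearMap.sub_apply, LinearMap.smul_apply,
        hJdef _ hcz _ hy _ hy', hJdef _ hz _ hy _ hy', map_smul, LinearMap.smul_apply]
      simp
    exact sub_eq_zero.mp h0
  intro x hx hxx v hv hperp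
  -- the set of J w x forms a submodule
  set S : Set L := {v : L | ∃ w ∈ ctr L, v = J w x} with hS
  have hSsub : ∃ N : Submodule ℝ L, (N : Set L) = S := by
    refine ⟨⟨⟨⟨S, ?_⟩, ?_⟩, ?_⟩, rfl⟩
    · rintro a b ⟨za, hza, rfl⟩ ⟨zb, hzb, rfl⟩
      exact ⟨za + zb, (ctr L).add_mem hza hzb, (hJadd za hza zb hzb x hx).symm⟩
    · exact ⟨0, (ctr L).zero_mem, (hJ0 x hx).symm⟩
    · rintro c a ⟨za, hza, rfl⟩
      exact ⟨c • za, (ctr L).smul_mem c hza, (hJsmul c za hza x hx).symm⟩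
  obtain ⟨N, hN⟩ := hSsub
  -- decompose v
  have hvmem : v ∈ Submodule.span ℝ {x} ⊔ N := by
    have : Submodule.span ℝ ({x} ∪ S) = Submodule.span ℝ {x} ⊔ N := by
      rw [Submodule.span_union, ← hN, Submodule.span_eq]
    rwa [this] at hv
  obtain ⟨a, ha, b, hb, hab⟩ := Submodule.mem_sup.mp hvmem
  obtain ⟨c, rfl⟩ := Submodule.mem_span_singleton.mp ha
  have hbS : b ∈ S := by rw [← hN]; exact hb
  obtain ⟨z, hz, rfl⟩ := hbS
  -- membership facts
  have hxS : x ∈ Submodule.span ℝ ({x} ∪ S) :=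
    Submodule.subset_span (Set.mem_union_left _ rfl)
  have hJwS : ∀ w ∈ ctr L, J w x ∈ Submodule.span ℝ ({x} ∪ S) := by
    intro w hw
    exact Submodule.subset_span (Set.mem_union_right _ ⟨w, hw, rfl⟩)
  -- B (J w x) x = 0
  have hBJx : ∀ w ∈ ctr L, B (J w x) x = 0 := by
    intro w hw
    rw [hJdef _ hw _ hx _ hx, lie_self, map_zero]
  -- c = 0
  have hc : c = 0 := by
    have h1 : B (c • x + J z x) x = 0 := by rw [hab]; exact hperp x hxS
    rw [map_add, map_smul, LinearMap.add_apply, LinearMap.smul_apply,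
      hBJx z hz] at h1
    have : c * B x x = 0 := by simpa using h1
    exact (mul_eq_zero.mp this).resolve_right hxx
  subst hab
  rw [hc, zero_smul, zero_add] at hperp hv ⊢
  -- key identity : B (J z x) (J w x) = B z w * B x x
  have hkey : ∀ w ∈ ctr L, B (J z x) (J w x) = B z w * B x x := by
    intro w hw
    have hzw : z + w ∈ ctr L := (ctr L).add_mem hz hw
    have hJzx : J z x ∈ n1 := hJmap _ hz _ hx
    have hJwx : J w x ∈ n1 := hJmap _ hw _ hx
    -- polarization applied to x
    have hpol : J z (J w x) + J w (J z x) = -(2 * B z w) • x := by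
      have h1 : J (z + w) (J (z + w) x) = -(B (z + w) (z + w)) • x := hJsq _ hzw _ hx
      rw [hJadd z hz w hw x hx, map_add, map_add,
        hJadd z hz w hw (J z x) hJzx, hJadd z hz w hw (J w x) hJwx,
        hJsq _ hz _ hx, hJsq _ hw _ hx] at h1
      have hBsym : B w z = B z w := hsymm w z
      have h2 : (B (z + w)) z + (B (z + w)) w = B z z + 2 * B z w + B w w := by
        simp only [map_add, LinearMap.add_apply]; rw [hBsym]; ring
      rw [h2] at h1
      linear_combination (norm := module) h1
    -- B (J z x) (J w x) = -B (J z (J w x)) x and symmetric version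
    have e1 : B (J z x) (J w x) = -B (J z (J w x)) x := by
      rw [hJdef _ hz _ hx _ hJwx, hJdef _ hz _ hJwx _ hx, ← lie_skew, map_neg]
    have e2 : B (J w x) (J z x) = -B (J w (J z x)) x := by
      rw [hJdef _ hw _ hx _ hJzx, hJdef _ hw _ hJzx _ hx, ← lie_skew, map_neg]
    have e3 : B (J z x) (J w x) = B (J w x) (J z x) := hsymm _ _
    have e4 : B (J z (J w x)) x + B (J w (J z x)) x = -(2 * B z w) * B x x := by
      have : B (J z (J w x) + J w (J z x)) x = B ((-(2 * B z w)) • x) x := by rw [hpol]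
      rw [map_add, LinearMap.add_apply, map_smul, LinearMap.smul_apply] at this
      simpa using this
    nlinarith [e1, e2, e3, e4]
  -- conclude
  have hz0 : z = 0 := by
    apply hctrnd z hz
    intro w hw
    have := hperp (J w x) (hJwS w hw)
    rw [hkey w hw] at this
    exact (mul_eq_zero.mp this).resolve_right hxx
  rw [hz0]
  exact hJ0 x hx
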